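/- A subset L of the natural numbers including 0 is the leaf distance set of some vertex in some finite tree if and only if it is not the case that L contains both 0 and 1 and has cardinality at least 3. Equivalently, L fails to be admissible exactly when {0,1} ⊆ L and |L| ≥ 3. -/

import Mathlib

/-- The leaf distance set of the vertex `v` in the graph `G`: the set of distances from
`v` to the leaves (vertices of degree at most 1) of `G`. -/
def leafDistSet {V : Type} (G : SimpleGraph V) (v : V) : Set ℕ :=
  {d : ℕ | ∃ u : V, Nat.card (G.neighborSet u) ≤ 1 ∧ G.dist v u = d}

/-- A set `L ⊆ ℕ ∪ {0}` is admissible if it is the leaf distance set of some vertex of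
some finite tree. -/
def Admissible (L : Set ℕ) : Prop :=
  ∃ (V : Type) (_ : Fintype V) (G : SimpleGraph V) (v : V),
    G.IsTree ∧ L = leafDistSet G v

open SimpleGraph Walk


open SimpleGraph Walk

lemma acyclic_of_height {V : Type} (G : SimpleGraph V) (f : V → ℕ)
    (hadj : ∀ ⦃x y⦄, G.Adj x y → f x = f y + 1 ∨ f y = f x + 1)
    (huniq : ∀ ⦃x y z⦄, G.Adj x y → G.Adj x z → f y < f x → f z < f x → y = z) :
    G.IsAcyclic := by
  classical
  intro a c hc
  obtain ⟨u, hu, hmax⟩ := Finset.exists_max_image c.support.toFinset f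
    ⟨a, by simp [Walk.start_mem_support]⟩
  rw [List.mem_toFinset] at hu
  have hc' := hc.rotate hu
  have hlen : 3 ≤ (c.rotate u hu).length := hc'.three_le_length
  have hsup : ∀ w ∈ (c.rotate u hu).support, f w ≤ f u := by
    intro w hw
    rw [Walk.support_eq_cons, List.mem_cons] at hw
    rcases hw with rfl | hw
    · exact le_refl _
    · exact hmax w (List.mem_toFinset.2
        (List.mem_of_mem_tail (((Walk.support_rotate c u hu).mem_iff).1 hw)))
  set c' := c.rotate u hu with hdef
  clear_value c'
  clear hdef hc hu hmax
  cases c' with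
  | nil => simp at hlen
  | @cons _ b _ hub p =>
    obtain ⟨x, q, hxu, heq⟩ := Walk.exists_cons_eq_concat hub p
    have hnd : (Walk.cons hub p).edges.Nodup := hc'.edges_nodup
    cases q with
    | nil =>
      have := congrArg Walk.length heq
      simp [Walk.length_concat] at this
      simp [Walk.nil_iff_length_eq.mp this] at hlen
    | @cons _ y _ hq q' =>
      have hedges := congrArg Walk.edges heq
      rw [Walk.edges_concat, Walk.edges_cons, Walk.edges_cons] at hedges
      simp only [List.concat_eq_append, List.cons_append] at hedges
      have hxe : s(x, u) ∈ p.edges := by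
        obtain ⟨-, h2⟩ := List.cons.injEq .. ▸ hedges
        rw [h2]
        simp
      have hbx : b ≠ x := by
        rintro rfl
        rw [Walk.edges_cons, List.nodup_cons] at hnd
        exact hnd.1 (by rwa [Sym2.eq_swap] at hxe)
      have hxsup : x ∈ (Walk.cons hub p).support := by
        rw [heq, Walk.support_concat]
        simp [List.concat_eq_append, Walk.end_mem_support]
      have hbsup : b ∈ (Walk.cons hub p).support := by
        rw [Walk.support_cons]
        exact List.mem_cons_of_mem _ (Walk.start_mem_support _)
      have hfb : f b < f u := by
        rcases hadj hub with h | h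
        · omega
        · have := hsup b hbsup; omega
      have hfx : f x < f u := by
        rcases hadj hxu.symm with h | h
        · omega
        · have := hsup x hxsup; omega
      exact hbx (huniq hub hxu.symm hfb hfx)


section LB
variable {V : Type} {G : SimpleGraph V}

lemma length_ge_of_pot (f : V → ℤ) (hadj : ∀ ⦃x y⦄, G.Adj x y → (f x - f y).natAbs = 1)
    {u v : V} (p : G.Walk u v) : |f u - f v| ≤ (p.length : ℤ) := by
  induction p with
  | nil => simp
  | @cons a b c h q ih =>
    have h1 : |f a - f b| = 1 := by
      rw [Int.abs_eq_natAbs, hadj h]; rfl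
    calc |f a - f c| ≤ |f a - f b| + |f b - f c| := abs_sub_le _ _ _
      _ ≤ 1 + q.length := by rw [h1]; exact add_le_add_right ih 1
      _ = ((q.length + 1 : ℕ) : ℤ) := by push_cast; ring
      _ = _ := by simp

lemma dist_ge_of_pot (f : V → ℤ) (hadj : ∀ ⦃x y⦄, G.Adj x y → (f x - f y).natAbs = 1)
    {u v : V} (hr : G.Reachable u v) : |f u - f v| ≤ (G.dist u v : ℤ) := by
  obtain ⟨p, hp⟩ := hr.exists_walk_length_eq_dist
  rw [← hp]
  exact length_ge_of_pot f hadj p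
end LB

section Spider
variable {ι : Type} (ℓ : ι → ℕ)

abbrev SV := Option ((i : ι) × Fin (ℓ i))

def ht : SV ℓ → ℕ
  | none => 0
  | some ⟨_, p⟩ => p + 1

def par : SV ℓ → SV ℓ
  | none => none
  | some ⟨i, p⟩ =>
    if h : p.val = 0 then none
    else some ⟨i, ⟨p.val - 1, lt_of_le_of_lt (Nat.pred_le _) p.isLt⟩⟩

def spider : SimpleGraph (SV ℓ) where
  Adj x y := (par ℓ x = y ∨ par ℓ y = x) ∧ x ≠ y
  symm := ⟨by rintro x y ⟨h | h, hne⟩ <;> exact ⟨by tauto, hne.symm⟩⟩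
  loopless := ⟨by rintro x ⟨-, hne⟩; exact hne rfl⟩

lemma ht_par {x : SV ℓ} (hx : x ≠ none) : ht ℓ (par ℓ x) + 1 = ht ℓ x := by
  match x with
  | none => exact absurd rfl hx
  | some ⟨i, p⟩ =>
    by_cases h : p.val = 0
    · simp [par, ht, h]
    · simp only [par, ht, dif_neg h]
      simp [ht]
      omega

lemma par_ne {x : SV ℓ} (hx : x ≠ none) : par ℓ x ≠ x := by
  intro h
  have := ht_par ℓ hx
  rw [h] at this
  omega

lemma adj_par {x : SV ℓ} (hx : x ≠ none) : (spider ℓ).Adj x (par ℓ x) :=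
  ⟨Or.inl rfl, fun h => par_ne ℓ hx h.symm⟩

lemma adj_ht {x y : SV ℓ} (h : (spider ℓ).Adj x y) :
    ht ℓ x = ht ℓ y + 1 ∨ ht ℓ y = ht ℓ x + 1 := by
  obtain ⟨h | h, hne⟩ := h
  · have hx : x ≠ none := by rintro rfl; exact hne (by simpa [par] using h)
    left; rw [← h]; exact (ht_par ℓ hx).symm
  · have hy : y ≠ none := by rintro rfl; exact hne (by simpa [par] using h.symm)
    right; rw [← h]; exact (ht_par ℓ hy).symm

lemma lower_eq_par {x y : SV ℓ} (h : (spider ℓ).Adj x y) (hlt : ht ℓ y < ht ℓ x) :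
    y = par ℓ x := by
  obtain ⟨h | h, hne⟩ := h
  · exact h.symm
  · exfalso
    have hy : y ≠ none := by rintro rfl; exact hne (by simpa [par] using h.symm)
    have := ht_par ℓ hy
    rw [h] at this
    omega

lemma spider_acyclic : (spider ℓ).IsAcyclic :=
  acyclic_of_height _ (ht ℓ) (fun _ _ h => adj_ht ℓ h)
    (fun _ y z hxy hxz hy hz => by rw [lower_eq_par ℓ hxy hy, lower_eq_par ℓ hxz hz])

@[simp] lemma ht_none : ht ℓ none = 0 := rfl
@[simp] lemma ht_some (i : ι) (p : Fin (ℓ i)) : ht ℓ (some ⟨i, p⟩) = p + 1 := rfl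

lemma exists_walk_to_none_aux : ∀ (n : ℕ) (x : SV ℓ), ht ℓ x = n →
    ∃ w : (spider ℓ).Walk x none, w.length = ht ℓ x := by
  intro n
  induction n using Nat.strong_induction_on with
  | _ n ih =>
    rintro (_ | ⟨i, p⟩) hn
    · exact ⟨Walk.nil, by simp⟩
    · have hx : (some ⟨i, p⟩ : SV ℓ) ≠ none := by simp
      have hht := ht_par ℓ hx
      obtain ⟨w, hw⟩ := ih (ht ℓ (par ℓ (some ⟨i, p⟩))) (by omega) _ rfl
      exact ⟨Walk.cons (adj_par ℓ hx) w, by rw [Walk.length_cons, hw, hht]⟩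

lemma exists_walk_to_none (x : SV ℓ) :
    ∃ w : (spider ℓ).Walk x none, w.length = ht ℓ x :=
  exists_walk_to_none_aux ℓ _ x rfl

lemma spider_connected : (spider ℓ).Connected := by
  rw [connected_iff]
  refine ⟨fun x y => ?_, ⟨none⟩⟩
  obtain ⟨wx, -⟩ := exists_walk_to_none ℓ x
  obtain ⟨wy, -⟩ := exists_walk_to_none ℓ y
  exact ⟨wx.append wy.reverse⟩

lemma spider_isTree : (spider ℓ).IsTree :=
  ⟨spider_connected ℓ, spider_acyclic ℓ⟩

lemma dist_none (x : SV ℓ) : (spider ℓ).dist none x = ht ℓ x := by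
  obtain ⟨w, hw⟩ := exists_walk_to_none ℓ x
  have h1 : (spider ℓ).dist none x ≤ ht ℓ x := by
    rw [← hw]
    simpa using SimpleGraph.dist_le w.reverse
  have h2 := dist_ge_of_pot (G := spider ℓ) (fun z => (ht ℓ z : ℤ))
    (fun a b h => by
      show ((ht ℓ a : ℤ) - (ht ℓ b : ℤ)).natAbs = 1
      rcases adj_ht ℓ h with h | h <;> omega)
    ((spider_connected ℓ).preconnected none x)
  have h3 : |((ht ℓ none : ℕ) : ℤ) - ((ht ℓ x : ℕ) : ℤ)| ≤ ((spider ℓ).dist none x : ℤ) := h2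
  rw [ht_none] at h3
  simp only [Nat.cast_zero, zero_sub, abs_neg, Int.abs_natCast] at h3
  omega
end Spider

section Neighbors
variable {ι : Type} (ℓ : ι → ℕ)

lemma adj_none_iff (y : SV ℓ) :
    (spider ℓ).Adj none y ↔ ∃ (i : ι) (h : 0 < ℓ i), y = some ⟨i, ⟨0, h⟩⟩ := by
  constructor
  · rintro ⟨h | h, hne⟩
    · exact absurd h hne
    · match y with
      | none => exact absurd rfl hne
      | some ⟨i, p⟩ =>
        have h0 : p.val = 0 := by
          by_contra h0
          rw [par, dif_neg h0] at h
          exact (Option.some_ne_none _) h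
        exact ⟨i, lt_of_le_of_lt (Nat.zero_le _) p.isLt, by
          cases p with | mk v hv => simp_all⟩
  · rintro ⟨i, h, rfl⟩
    exact ⟨Or.inr (by simp [par]), by simp⟩

lemma neighborSet_none_eq (hℓ : ∀ i, 0 < ℓ i) :
    (spider ℓ).neighborSet none = Set.range (fun i : ι => (some ⟨i, ⟨0, hℓ i⟩⟩ : SV ℓ)) := by
  ext y
  rw [SimpleGraph.mem_neighborSet, adj_none_iff]
  constructor
  · rintro ⟨i, h, rfl⟩
    exact ⟨i, rfl⟩
  · rintro ⟨i, rfl⟩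
    exact ⟨i, hℓ i, rfl⟩

lemma card_neighborSet_none (hℓ : ∀ i, 0 < ℓ i) :
    Nat.card ((spider ℓ).neighborSet none) = Nat.card ι := by
  rw [neighborSet_none_eq ℓ hℓ]
  exact Nat.card_range_of_injective (f := fun i : ι => (some ⟨i, ⟨0, hℓ i⟩⟩ : SV ℓ))
    (fun a b hab => by simpa using congrArg (fun o => o.map Sigma.fst) hab)

lemma neighborSet_top (i : ι) (p : Fin (ℓ i)) (hp : (p : ℕ) + 1 = ℓ i) :
    (spider ℓ).neighborSet (some ⟨i, p⟩) = {par ℓ (some ⟨i, p⟩)} := by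
  ext y
  rw [SimpleGraph.mem_neighborSet, Set.mem_singleton_iff]
  constructor
  · rintro ⟨h | h, hne⟩
    · exact h.symm
    · exfalso
      match y with
      | none => rw [par] at h; exact hne (by simp [← h])
      | some ⟨j, q⟩ =>
        have h0 : (q : ℕ) ≠ 0 := by
          intro h0
          rw [par, dif_pos h0] at h
          exact (Option.some_ne_none _) h.symm
        rw [par, dif_neg h0] at h
        have hji : j = i := by
          have := congrArg (fun o => Option.map Sigma.fst o) h
          simpa using this
        subst hji
        have hq : (q : ℕ) - 1 + 1 = (p : ℕ) + 1 := by
          have := congrArg (ht ℓ) h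
          simpa [ht] using this
        have := q.isLt
        omega
  · rintro rfl
    exact adj_par ℓ (by simp)

lemma card_neighborSet_top (i : ι) (p : Fin (ℓ i)) (hp : (p : ℕ) + 1 = ℓ i) :
    Nat.card ((spider ℓ).neighborSet (some ⟨i, p⟩)) ≤ 1 := by
  rw [neighborSet_top ℓ i p hp]
  simp

lemma two_le_card_internal [Fintype ι] (i : ι) (p : Fin (ℓ i)) (hp : (p : ℕ) + 1 < ℓ i) :
    2 ≤ Nat.card ((spider ℓ).neighborSet (some ⟨i, p⟩)) := by
  classical
  set x : SV ℓ := some ⟨i, p⟩ with hx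
  have hxn : x ≠ none := by simp [hx]
  have hpar : par ℓ x ∈ (spider ℓ).neighborSet x := by
    rw [SimpleGraph.mem_neighborSet]; exact adj_par ℓ hxn
  set c : SV ℓ := some ⟨i, ⟨(p : ℕ) + 1, hp⟩⟩ with hc
  have hchild : c ∈ (spider ℓ).neighborSet x := by
    refine ⟨Or.inr ?_, ?_⟩
    · rw [hc, par, dif_neg (by simp)]
      simp [hx]
    · intro h
      have := congrArg (ht ℓ) h
      simp [hx, hc, ht] at this
  have hne : par ℓ x ≠ c := by
    intro h
    have h1 := ht_par ℓ hxn
    have := congrArg (ht ℓ) h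
    simp [hx, hc, ht] at this h1
    omega
  rw [Nat.card_coe_set_eq]
  have := (Set.one_lt_ncard_iff (Set.toFinite _)).2 ⟨par ℓ x, c, hpar, hchild, hne⟩
  omega

end Neighbors

section Dist2
variable {ι : Type} [DecidableEq ι] (ℓ : ι → ℕ)

noncomputable def pot (i₀ : ι) : SV ℓ → ℤ
  | none => 0
  | some ⟨i, p⟩ => if i = i₀ then -((p : ℤ) + 1) else (p : ℤ) + 1

lemma pot_par (i₀ : ι) {x : SV ℓ} (hx : x ≠ none) :
    (pot ℓ i₀ x - pot ℓ i₀ (par ℓ x)).natAbs = 1 := by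
  match x with
  | none => exact absurd rfl hx
  | some ⟨i, p⟩ =>
    by_cases h0 : (p : ℕ) = 0
    · rw [par, dif_pos h0]
      by_cases hi : i = i₀ <;> simp [pot, hi, h0]
    · rw [par, dif_neg h0]
      by_cases hi : i = i₀ <;> simp [pot, hi] <;> omega

lemma pot_adj (i₀ : ι) {x y : SV ℓ} (h : (spider ℓ).Adj x y) :
    (pot ℓ i₀ x - pot ℓ i₀ y).natAbs = 1 := by
  obtain ⟨h | h, hne⟩ := h
  · have hx : x ≠ none := by rintro rfl; exact hne (by simpa [par] using h)
    rw [← h]; exact pot_par ℓ i₀ hx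
  · have hy : y ≠ none := by rintro rfl; exact hne (by simpa [par] using h.symm)
    rw [← h]
    have := pot_par ℓ i₀ hy
    omega

lemma dist_v0 (hℓ : ∀ i, 0 < ℓ i) (i₀ : ι) (h₀ : ℓ i₀ = 1) (x : SV ℓ)
    (hx : x ≠ some ⟨i₀, ⟨0, hℓ i₀⟩⟩) :
    (spider ℓ).dist (some ⟨i₀, ⟨0, hℓ i₀⟩⟩) x = ht ℓ x + 1 := by
  set v0 : SV ℓ := some ⟨i₀, ⟨0, hℓ i₀⟩⟩ with hv0
  have hparv0 : par ℓ v0 = none := by rw [hv0, par]; simp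
  have hadj : (spider ℓ).Adj v0 none := by
    have := adj_par ℓ (x := v0) (by simp [hv0])
    rwa [hparv0] at this
  have hub : (spider ℓ).dist v0 x ≤ ht ℓ x + 1 := by
    have h1 : (spider ℓ).dist v0 none ≤ 1 := by
      simpa using SimpleGraph.dist_le (Walk.cons hadj Walk.nil)
    have h2 := (spider_connected ℓ).dist_triangle (u := v0) (v := none) (w := x)
    have h3 := dist_none ℓ x
    omega
  have hlb := dist_ge_of_pot (G := spider ℓ) (pot ℓ i₀) (fun a b h => pot_adj ℓ i₀ h)
    ((spider_connected ℓ).preconnected v0 x)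
  have hpv0 : pot ℓ i₀ v0 = -1 := by rw [hv0]; simp [pot]
  rw [hpv0] at hlb
  match x with
  | none =>
    have hp0 : pot ℓ i₀ none = 0 := rfl
    rw [hp0] at hlb
    simp only [zero_sub, sub_zero] at hlb
    have habs : |(-1 : ℤ)| = 1 := by norm_num
    rw [habs] at hlb
    have hh : ht ℓ (none : SV ℓ) = 0 := rfl
    omega
  | some ⟨i, p⟩ =>
    by_cases hi : i = i₀
    · exfalso
      subst hi
      apply hx
      have hp1 : (p : ℕ) = 0 := by have := p.isLt; omega
      have hp2 : p = ⟨0, hℓ i⟩ := Fin.ext hp1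
      rw [hv0, hp2]
    · have hp : pot ℓ i₀ (some ⟨i, p⟩) = (p : ℤ) + 1 := by simp [pot, hi]
      rw [hp] at hlb
      have heq : (-1 : ℤ) - ((p : ℤ) + 1) = -((p : ℤ) + 2) := by ring
      rw [heq, abs_neg, abs_of_nonneg (by positivity)] at hlb
      have hh : ht ℓ (some ⟨i, p⟩) = (p : ℕ) + 1 := rfl
      omega
end Dist2

section Cases
variable {ι : Type} [Fintype ι] (ℓ : ι → ℕ)

lemma leaf_cases (hℓ : ∀ i, 0 < ℓ i) {u : SV ℓ}
    (h : Nat.card ((spider ℓ).neighborSet u) ≤ 1) :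
    (u = none ∧ Nat.card ι ≤ 1) ∨
      ∃ (i : ι) (p : Fin (ℓ i)), u = some ⟨i, p⟩ ∧ (p : ℕ) + 1 = ℓ i := by
  match u with
  | none => exact Or.inl ⟨rfl, by rw [← card_neighborSet_none ℓ hℓ]; exact h⟩
  | some ⟨i, p⟩ =>
    right
    refine ⟨i, p, rfl, ?_⟩
    by_contra hne
    have hlt : (p : ℕ) + 1 < ℓ i := by have := p.isLt; omega
    have := two_le_card_internal ℓ i p hlt
    omega

lemma leafDistSet_center (hℓ : ∀ i, 0 < ℓ i) (h2 : 2 ≤ Nat.card ι) :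
    leafDistSet (spider ℓ) none = {d | ∃ i, ℓ i = d} := by
  ext d
  simp only [leafDistSet, Set.mem_setOf_eq]
  constructor
  · rintro ⟨u, hleaf, rfl⟩
    rcases leaf_cases ℓ hℓ hleaf with ⟨rfl, hcard⟩ | ⟨i, p, rfl, hp⟩
    · omega
    · refine ⟨i, ?_⟩
      rw [dist_none]
      simp only [ht_some]
      omega
  · rintro ⟨i, rfl⟩
    refine ⟨some ⟨i, ⟨ℓ i - 1, by have := hℓ i; omega⟩⟩, ?_, ?_⟩
    · exact card_neighborSet_top ℓ i _ (by simp; have := hℓ i; omega)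
    · rw [dist_none]
      simp only [ht_some]
      have := hℓ i
      omega

lemma leafDistSet_leg [DecidableEq ι] (hℓ : ∀ i, 0 < ℓ i) (h2 : 2 ≤ Nat.card ι)
    (i₀ : ι) (h₀ : ℓ i₀ = 1) :
    leafDistSet (spider ℓ) (some ⟨i₀, ⟨0, hℓ i₀⟩⟩) =
      {0} ∪ {d | ∃ i, i ≠ i₀ ∧ ℓ i + 1 = d} := by
  set v0 : SV ℓ := some ⟨i₀, ⟨0, hℓ i₀⟩⟩ with hv0
  ext d
  simp only [leafDistSet, Set.mem_setOf_eq, Set.mem_union, Set.mem_singleton_iff]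
  constructor
  · rintro ⟨u, hleaf, rfl⟩
    rcases leaf_cases ℓ hℓ hleaf with ⟨rfl, hcard⟩ | ⟨i, p, rfl, hp⟩
    · omega
    · by_cases hi : i = i₀
      · subst hi
        have hp1 : p = ⟨0, hℓ i⟩ := Fin.ext (by have := p.isLt; omega)
        subst hp1
        left
        rw [← hv0, SimpleGraph.dist_self]
      · right
        refine ⟨i, hi, ?_⟩
        have hneq : (some ⟨i, p⟩ : SV ℓ) ≠ some ⟨i₀, ⟨0, hℓ i₀⟩⟩ := by
          intro h
          apply hi
          simpa using congrArg (fun o : SV ℓ => Option.map Sigma.fst o) h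
        rw [dist_v0 ℓ hℓ i₀ h₀ _ hneq]
        simp only [ht_some]
        omega
  · rintro (rfl | ⟨i, hi, rfl⟩)
    · exact ⟨v0, by rw [hv0]; exact card_neighborSet_top ℓ i₀ _ (by simpa using h₀.symm),
        SimpleGraph.dist_self⟩
    · refine ⟨some ⟨i, ⟨ℓ i - 1, by have := hℓ i; omega⟩⟩, ?_, ?_⟩
      · exact card_neighborSet_top ℓ i _ (by simp; have := hℓ i; omega)
      · have hneq : (some ⟨i, ⟨ℓ i - 1, by have := hℓ i; omega⟩⟩ : SV ℓ) ≠ some ⟨i₀, ⟨0, hℓ i₀⟩⟩ := by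
          intro h
          apply hi
          simpa using congrArg (fun o : SV ℓ => Option.map Sigma.fst o) h
        rw [hv0, dist_v0 ℓ hℓ i₀ h₀ _ hneq]
        simp only [ht_some]
        have := hℓ i
        omega
end Cases

lemma forward_subset {V : Type} [Fintype V] (G : SimpleGraph V) (v : V) (htree : G.IsTree)
    (h0 : 0 ∈ leafDistSet G v) (h1 : 1 ∈ leafDistSet G v) :
    leafDistSet G v ⊆ {0, 1} := by
  obtain ⟨u0, hl0, hd0⟩ := h0
  obtain ⟨u1, hl1, hd1⟩ := h1
  have hconn := htree.isConnected
  have hv0 : v = u0 := (hconn.dist_eq_zero_iff).mp hd0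
  subst hv0
  have hadj : G.Adj v u1 := SimpleGraph.dist_eq_one_iff_adj.mp hd1
  have hnsv : ∀ y, G.Adj v y → y = u1 := by
    intro y hy
    rw [Nat.card_coe_set_eq, Set.ncard_le_one (Set.toFinite _)] at hl0
    exact hl0 y hy u1 hadj
  have hnsu : ∀ y, G.Adj u1 y → y = v := by
    intro y hy
    rw [Nat.card_coe_set_eq, Set.ncard_le_one (Set.toFinite _)] at hl1
    exact hl1 y hy v hadj.symm
  have key : ∀ (a w : V) (p : G.Walk a w), (a = v ∨ a = u1) → (w = v ∨ w = u1) := by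
    intro a w p
    induction p with
    | nil => exact id
    | cons h q ih =>
      intro ha
      apply ih
      rcases ha with rfl | rfl
      · exact Or.inr (hnsv _ h)
      · exact Or.inl (hnsu _ h)
  rintro d ⟨u', -, rfl⟩
  obtain ⟨p⟩ := hconn.preconnected v u'
  rcases key v u' p (Or.inl rfl) with rfl | rfl
  · simp [SimpleGraph.dist_self]
  · simp [hd1]

/-- A (finite, nonempty) subset `L` of the natural numbers (including `0`)
is the leaf distance set of some vertex in some finite tree if and only if it is not the
case that `L` contains both `0` and `1` and has cardinality at least `3`. -/
theorem admissible_iff (L : Set ℕ) (hfin : L.Finite) (hne : L.Nonempty) :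
    Admissible L ↔ ¬ (0 ∈ L ∧ 1 ∈ L ∧ 3 ≤ L.ncard) := by
  constructor
  · rintro ⟨V, hV, G, v, htree, rfl⟩ ⟨h0, h1, hcard⟩
    have hsub := forward_subset G v htree h0 h1
    have hle := Set.ncard_le_ncard hsub ((Set.finite_singleton 1).insert 0)
    have h01 : ({0, 1} : Set ℕ).ncard = 2 := Set.ncard_pair (by norm_num)
    omega
  · intro hnot
    by_cases h0 : 0 ∈ L
    · by_cases h1 : 1 ∈ L
      · -- L = {0, 1}
        have hsub : ({0, 1} : Set ℕ) ⊆ L := by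
          rintro x hx
          rcases hx with rfl | hx
          · exact h0
          · rw [Set.mem_singleton_iff] at hx; subst hx; exact h1
        have hcard : L.ncard ≤ 2 := by
          by_contra h
          exact hnot ⟨h0, h1, by omega⟩
        have hL : L = {0, 1} :=
          (Set.eq_of_subset_of_ncard_le hsub
            (by rw [Set.ncard_pair (by norm_num)]; exact hcard) hfin).symm
        refine ⟨SV (fun _ : PUnit => 1), inferInstance, spider _, none, spider_isTree _, ?_⟩
        rw [hL]
        ext d
        simp only [leafDistSet, Set.mem_setOf_eq, Set.mem_insert_iff, Set.mem_singleton_iff]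
        constructor
        · rintro (rfl | rfl)
          · refine ⟨none, ?_, SimpleGraph.dist_self⟩
            rw [card_neighborSet_none _ (fun _ => one_pos)]
            simp [Nat.card_eq_fintype_card]
          · refine ⟨some ⟨PUnit.unit, ⟨0, one_pos⟩⟩, ?_, ?_⟩
            · exact card_neighborSet_top _ PUnit.unit _ (by simp)
            · rw [dist_none]; rfl
        · rintro ⟨u, -, rfl⟩
          match u with
          | none => left; exact SimpleGraph.dist_self
          | some ⟨i, p⟩ =>
            right
            rw [dist_none]
            have hp : (p : ℕ) = 0 := by
              have h := p.isLt
              simp only [] at h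
              omega
            simp [hp]
      · by_cases hL0 : L = {0}
        · refine ⟨SV (fun i : Empty => 0), inferInstance, spider _, none, spider_isTree _, ?_⟩
          rw [hL0]
          ext d
          simp only [leafDistSet, Set.mem_setOf_eq, Set.mem_singleton_iff]
          constructor
          · rintro rfl
            refine ⟨none, ?_, SimpleGraph.dist_self⟩
            rw [card_neighborSet_none _ (fun i => i.elim)]
            simp [Nat.card_eq_fintype_card]
          · rintro ⟨u, -, rfl⟩
            match u with
            | none => exact SimpleGraph.dist_self
            | some ⟨i, p⟩ => exact i.elim
        · -- case D
          classical
          set s : Finset ℕ := hfin.toFinset with hs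
          set s' : Finset ℕ := s.erase 0 with hs'
          have hs'ne : s'.Nonempty := by
            obtain ⟨d, hd, hd0⟩ : ∃ d ∈ L, d ≠ 0 := by
              by_contra hc
              push_neg at hc
              apply hL0
              ext x
              constructor
              · intro hx; exact hc x hx
              · rintro rfl; exact h0
            exact ⟨d, Finset.mem_erase.mpr ⟨hd0, hfin.mem_toFinset.mpr hd⟩⟩
          have hge2 : ∀ d ∈ s', 2 ≤ d := by
            intro d hd
            obtain ⟨hd0, hdL⟩ := Finset.mem_erase.mp hd
            have hdL' : d ∈ L := hfin.mem_toFinset.mp hdL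
            have hd1 : d ≠ 1 := fun h => h1 (h ▸ hdL')
            omega
          set ℓ : Option ↥s' → ℕ := fun o => Option.rec 1 (fun e => (e : ℕ) - 1) o with hℓdef
          have hℓ : ∀ i, 0 < ℓ i := by
            rintro (_ | ⟨e, he⟩)
            · exact one_pos
            · have := hge2 e he
              show 0 < (e : ℕ) - 1
              omega
          have h2 : 2 ≤ Nat.card (Option ↥s') := by
            rw [Nat.card_eq_fintype_card, Fintype.card_option, Fintype.card_coe]
            have := Finset.card_pos.mpr hs'ne
            omega
          refine ⟨SV ℓ, inferInstance, spider ℓ, some ⟨none, ⟨0, hℓ none⟩⟩, spider_isTree ℓ, ?_⟩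
          rw [leafDistSet_leg ℓ hℓ h2 none rfl]
          ext d
          simp only [Set.mem_union, Set.mem_singleton_iff, Set.mem_setOf_eq]
          constructor
          · intro hd
            by_cases hd0 : d = 0
            · exact Or.inl hd0
            · right
              have hds' : d ∈ s' := Finset.mem_erase.mpr ⟨hd0, hfin.mem_toFinset.mpr hd⟩
              refine ⟨some ⟨d, hds'⟩, by simp, ?_⟩
              have h2d := hge2 d hds'
              show ℓ (some ⟨d, hds'⟩) + 1 = d
              have hle : ℓ (some ⟨d, hds'⟩) = d - 1 := rfl
              omega
          · rintro (rfl | ⟨i, hi, rfl⟩)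
            · exact h0
            · match i with
              | none => exact absurd rfl hi
              | some ⟨e, he⟩ =>
                have h2e := hge2 e he
                have hle : ℓ (some ⟨e, he⟩) = e - 1 := rfl
                rw [hle]
                have heL : e ∈ L := hfin.mem_toFinset.mp (Finset.mem_of_mem_erase he)
                have heq : e - 1 + 1 = e := by omega
                rw [heq]
                exact heL
    · -- case A : 0 ∉ L
      classical
      set s : Finset ℕ := hfin.toFinset with hs
      have hsne : s.Nonempty := by
        obtain ⟨d, hd⟩ := hne
        exact ⟨d, hfin.mem_toFinset.mpr hd⟩
      set ℓ : ↥s × Bool → ℕ := fun x => (x.1 : ℕ) with hℓdef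
      have hℓ : ∀ x : ↥s × Bool, 0 < ℓ x := by
        rintro ⟨⟨d, hd⟩, b⟩
        have hdL : d ∈ L := hfin.mem_toFinset.mp hd
        have : d ≠ 0 := fun h => h0 (h ▸ hdL)
        show 0 < d
        omega
      have h2 : 2 ≤ Nat.card (↥s × Bool) := by
        rw [Nat.card_eq_fintype_card, Fintype.card_prod, Fintype.card_coe, Fintype.card_bool]
        have := Finset.card_pos.mpr hsne
        omega
      refine ⟨SV ℓ, inferInstance, spider ℓ, none, spider_isTree ℓ, ?_⟩
      rw [leafDistSet_center ℓ hℓ h2]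
      ext d
      simp only [Set.mem_setOf_eq]
      constructor
      · intro hd
        exact ⟨(⟨d, hfin.mem_toFinset.mpr hd⟩, true), rfl⟩
      · rintro ⟨⟨⟨e, he⟩, b⟩, rfl⟩
        exact hfin.mem_toFinset.mp he
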